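/- Let 0 < λ < 1 and α ∈ ℝ with cos α < 1, and let r ∈ ℝ be defined by tanh(2r) = (1−λ)/√(1+λ²−2λcos α) (the right-hand side lies in (0,1) under these hypotheses). Let X = [[0,1],[1,0]] and Z = [[1,0],[0,−1]] be complex 2×2 matrices, and define M = λ·exp(rX)·exp(−i(α/2)Z)·exp(−2rX)·exp(i(α/2)Z)·exp(rX). Then M is Hermitian with trace(M) = 1 + λ² and det(M) = λ² (so its eigenvalues are 1 and λ²), and M ≤ I in the positive semidefinite order (i.e., I − M is positive semidefinite). -/

import Mathlib

open Matrix ComplexOrder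

/-- The Pauli matrix `X = [[0,1],[1,0]]`. -/
def Xm : Matrix (Fin 2) (Fin 2) ℂ := !![0, 1; 1, 0]

/-- The Pauli matrix `Z = [[1,0],[0,−1]]`. -/
def Zm : Matrix (Fin 2) (Fin 2) ℂ := !![1, 0; 0, -1]

/-- `M = λ·exp(rX)·exp(−i(α/2)Z)·exp(−2rX)·exp(i(α/2)Z)·exp(rX)`. -/
noncomputable def Mmat (lam r α : ℝ) : Matrix (Fin 2) (Fin 2) ℂ :=
  (lam : ℂ) •
    (NormedSpace.exp ((r : ℂ) • Xm) * NormedSpace.exp ((-(Complex.I * (α / 2))) • Zm) *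
      NormedSpace.exp ((-(2 * r : ℂ)) • Xm) * NormedSpace.exp ((Complex.I * (α / 2)) • Zm) *
      NormedSpace.exp ((r : ℂ) • Xm))

lemma expZ (t : ℂ) : NormedSpace.exp (t • Zm) =
    !![Complex.exp t, 0; 0, Complex.exp (-t)] := by
  have h : t • Zm = Matrix.diagonal ![t, -t] := by
    ext i j; fin_cases i <;> fin_cases j <;> simp [Zm, Matrix.diagonal] <;> ring
  rw [h, Matrix.exp_diagonal]
  ext i j
  fin_cases i <;> fin_cases j <;>
    simp [Matrix.diagonal, Pi.exp_def, ← Complex.exp_eq_exp_ℂ]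


lemma expX (t : ℂ) : NormedSpace.exp (t • Xm) =
    !![Complex.cosh t, Complex.sinh t; Complex.sinh t, Complex.cosh t] := by
  set P : Matrix (Fin 2) (Fin 2) ℂ := !![1, 1; 1, -1] with hP
  have hPinv : P⁻¹ = (2:ℂ)⁻¹ • P := by
    apply Matrix.inv_eq_right_inv
    ext i j; fin_cases i <;> fin_cases j <;>
      simp [hP, Matrix.mul_apply, Fin.sum_univ_two] <;> ring
  have hU : IsUnit P := by
    apply Matrix.isUnit_iff_isUnit_det P |>.mpr
    simp [hP, Matrix.det_fin_two_of]
    norm_num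
  have hconj : t • Xm = P * (t • Zm) * P⁻¹ := by
    rw [hPinv]
    ext i j; fin_cases i <;> fin_cases j <;>
      simp [hP, Xm, Zm, Matrix.mul_apply, Fin.sum_univ_two] <;> ring
  rw [hconj, Matrix.exp_conj P (t • Zm) hU, expZ, hPinv]
  ext i j
  fin_cases i <;> fin_cases j <;>
    simp [hP, Matrix.mul_apply, Fin.sum_univ_two, Complex.cosh, Complex.sinh] <;> ring
lemma Mexplicit (lam r α : ℝ) :
    Mmat lam r α = (lam : ℂ) •
      !![Complex.cosh (2*(r:ℂ))^2 - Complex.sinh (2*(r:ℂ))^2 * Complex.cos α,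
         Complex.sinh (2*(r:ℂ)) * (Complex.cosh (2*(r:ℂ)) * (1 - Complex.cos α) + Complex.I * Complex.sin α);
         Complex.sinh (2*(r:ℂ)) * (Complex.cosh (2*(r:ℂ)) * (1 - Complex.cos α) - Complex.I * Complex.sin α),
         Complex.cosh (2*(r:ℂ))^2 - Complex.sinh (2*(r:ℂ))^2 * Complex.cos α] := by
  set ch := Complex.cosh (r:ℂ) with hch'
  set sh := Complex.sinh (r:ℂ) with hsh'
  set e := Complex.exp (-(Complex.I * ((α:ℂ) / 2))) with he'
  set f := Complex.exp (Complex.I * ((α:ℂ) / 2)) with hf'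
  have hch : ch^2 - sh^2 = 1 := Complex.cosh_sq_sub_sinh_sq _
  have hef : e * f = 1 := by
    rw [he', hf', ← Complex.exp_add]
    norm_num
  have he2 : e * e = Complex.cos α - Complex.I * Complex.sin α := by
    rw [he', ← Complex.exp_add]
    have : (-(Complex.I * ((α:ℂ) / 2))) + (-(Complex.I * ((α:ℂ) / 2))) = (-(α:ℂ)) * Complex.I := by
      ring
    rw [this, Complex.exp_mul_I, Complex.cos_neg, Complex.sin_neg]; ring
  have hf2 : f * f = Complex.cos α + Complex.I * Complex.sin α := by
    rw [hf', ← Complex.exp_add]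
    have : (Complex.I * ((α:ℂ) / 2)) + (Complex.I * ((α:ℂ) / 2)) = (α:ℂ) * Complex.I := by
      ring
    rw [this, Complex.exp_mul_I]; ring
  rw [Mmat, expX, expX, expZ, expZ, Complex.cosh_neg, Complex.sinh_neg,
    Complex.cosh_two_mul, Complex.sinh_two_mul]
  ext i j
  fin_cases i <;> fin_cases j <;>
    simp only [Matrix.mul_apply, Matrix.smul_apply, Fin.sum_univ_two, smul_eq_mul,
      Matrix.of_apply, Matrix.cons_val', Matrix.cons_val_zero, Matrix.cons_val_one, Matrix.head_cons,
      Matrix.head_fin_const, Matrix.empty_val', Matrix.cons_val_fin_one, neg_neg, Fin.zero_eta, Fin.mk_one, Fin.isValue,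
      ← hch', ← hsh', ← he', ← hf']
  · linear_combination (lam:ℂ) * ((-2*ch^2*sh^2) * he2 + (-2*ch^2*sh^2) * hf2
      + (sh^4 + 2*ch^2*sh^2 + ch^4) * hef)
  · linear_combination (lam:ℂ) * ((-2*ch^3*sh) * he2 + (-2*ch*sh^3) * hf2
      + (2*ch*sh^3 + 2*ch^3*sh) * hef + (2*ch*sh*Complex.sin α*Complex.I) * hch)
  · linear_combination (lam:ℂ) * ((-2*ch*sh^3) * he2 + (-2*ch^3*sh) * hf2
      + (2*ch*sh^3 + 2*ch^3*sh) * hef + (-2*ch*sh*Complex.sin α*Complex.I) * hch)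
  · linear_combination (lam:ℂ) * ((-2*ch^2*sh^2) * he2 + (-2*ch^2*sh^2) * hf2
      + (sh^4 + 2*ch^2*sh^2 + ch^4) * hef)
/-- For `0 < λ < 1`, `cos α < 1`, and `r` with `tanh(2r) = (1−λ)/√(1+λ²−2λcos α)`:
`M` is Hermitian, `trace M = 1 + λ²`, `det M = λ²`, and `I − M` is positive semidefinite. -/
theorem Mmat_hermitian_trace_det_le_one (lam r α : ℝ)
    (h0 : 0 < lam) (h1 : lam < 1) (hcos : Real.cos α < 1)
    (hr : Real.tanh (2 * r) = (1 - lam) / Real.sqrt (1 + lam ^ 2 - 2 * lam * Real.cos α)) :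
    (Mmat lam r α).IsHermitian ∧
    (Mmat lam r α).trace = 1 + (lam : ℂ) ^ 2 ∧
    (Mmat lam r α).det = (lam : ℂ) ^ 2 ∧
    (1 - Mmat lam r α).PosSemidef := by
  set c := Real.cos α with hc'
  set sn := Real.sin α with hsn'
  set C := Real.cosh (2*r) with hC'
  set S := Real.sinh (2*r) with hS'
  have hC2 : C^2 - S^2 = 1 := Real.cosh_sq_sub_sinh_sq _
  have hsc : sn^2 + c^2 = 1 := Real.sin_sq_add_cos_sq α
  have hCpos : 0 < C := by rw [hC']; exact Real.cosh_pos _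
  -- positivity of D
  have hD : 0 < 1 + lam^2 - 2*lam*c := by nlinarith
  have hsqD : Real.sqrt (1 + lam^2 - 2*lam*c) ^ 2 = 1 + lam^2 - 2*lam*c :=
    Real.sq_sqrt hD.le
  have hsqDpos : 0 < Real.sqrt (1 + lam^2 - 2*lam*c) := Real.sqrt_pos.mpr hD
  -- cross-multiplied form of hr
  have hr2 : S * Real.sqrt (1 + lam^2 - 2*lam*c) = (1 - lam) * C := by
    rw [Real.tanh_eq_sinh_div_cosh] at hr
    field_simp at hr
    linarith [hr]
  -- key : S^2 * (2*lam*(1-c)) = (1-lam)^2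
  have hS2 : S^2 * (2*lam*(1-c)) = (1-lam)^2 := by
    have h := congrArg (·^2) hr2
    simp only [mul_pow] at h
    rw [hsqD] at h
    nlinarith [h, hC2]
  set x := lam*(C^2 - S^2*c) with hx'
  set y := lam*(S*(C*(1-c))) with hy'
  set z := lam*(S*sn) with hz'
  have hx : 2*x = 1 + lam^2 := by
    rw [hx']; linear_combination 2*lam*hC2 + hS2
  have hdet : x^2 - y^2 - z^2 = lam^2 := by
    rw [hx', hy', hz']
    linear_combination (lam^2*(C^2 - S^2*c^2 + 1))*hC2 + (-(lam^2*S^2))*hsc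
  have hM : Mmat lam r α =
      !![(x:ℂ), (y:ℂ) + (z:ℂ)*Complex.I; (y:ℂ) - (z:ℂ)*Complex.I, (x:ℂ)] := by
    rw [Mexplicit]
    ext i j
    fin_cases i <;> fin_cases j <;>
      simp only [Matrix.smul_apply, Matrix.of_apply, Matrix.cons_val', Matrix.cons_val_zero,
        Matrix.cons_val_one, Matrix.head_cons, Matrix.head_fin_const, Matrix.empty_val',
        Matrix.cons_val_fin_one, Fin.zero_eta, Fin.mk_one, Fin.isValue, smul_eq_mul,
        hx', hy', hz', hC', hS', hc', hsn'] <;>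
      push_cast <;> ring
  have hherm : (Mmat lam r α).IsHermitian := by
    rw [Matrix.IsHermitian, hM]
    ext i j
    fin_cases i <;> fin_cases j <;>
      simp [Matrix.conjTranspose_apply, Complex.conj_ofReal, Complex.conj_I] <;> ring
  have htr : (Mmat lam r α).trace = 1 + (lam : ℂ) ^ 2 := by
    rw [hM, Matrix.trace_fin_two_of]
    have : (x:ℂ) + (x:ℂ) = ((2*x : ℝ) : ℂ) := by push_cast; ring
    rw [this, hx]; push_cast; ring
  have hdetM : (Mmat lam r α).det = (lam : ℂ) ^ 2 := by
    rw [hM, Matrix.det_fin_two_of]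
    have hdetC : (x:ℂ)^2 - (y:ℂ)^2 - (z:ℂ)^2 = (lam:ℂ)^2 := by exact_mod_cast hdet
    linear_combination hdetC + (z:ℂ)^2 * Complex.I_sq
  refine ⟨hherm, htr, hdetM, ?_⟩
  -- PSD of 1 - M
  set N := 1 - Mmat lam r α with hN'
  have hxC : 2*(x:ℂ) = 1 + (lam:ℂ)^2 := by exact_mod_cast hx
  have hdetC : (x:ℂ)^2 - (y:ℂ)^2 - (z:ℂ)^2 = (lam:ℂ)^2 := by exact_mod_cast hdet
  have hNherm : Nᴴ = N := by
    rw [hN', Matrix.conjTranspose_sub, hherm.eq]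
    simp
  have hNN : N * N = ((1 - lam^2 : ℝ) : ℂ) • N := by
    rw [hN', hM]
    ext i j
    fin_cases i <;> fin_cases j <;>
      simp only [Matrix.sub_apply, Matrix.one_apply, Matrix.mul_apply, Matrix.smul_apply,
        Fin.sum_univ_two, Matrix.of_apply, Matrix.cons_val', Matrix.cons_val_zero,
        Matrix.cons_val_one, Matrix.head_cons, Matrix.head_fin_const, Matrix.empty_val',
        Matrix.cons_val_fin_one, Fin.zero_eta, Fin.mk_one, Fin.isValue, smul_eq_mul] <;>
      norm_num <;> push_cast
    · linear_combination (x:ℂ)*hxC - hdetC - (z:ℂ)^2*Complex.I_sq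
    · linear_combination ((y:ℂ) + (z:ℂ)*Complex.I)*hxC
    · linear_combination ((y:ℂ) - (z:ℂ)*Complex.I)*hxC
    · linear_combination (x:ℂ)*hxC - hdetC - (z:ℂ)^2*Complex.I_sq
  have hlam2 : (0:ℝ) < 1 - lam^2 := by nlinarith
  set s : ℝ := (Real.sqrt (1 - lam^2))⁻¹ with hs'
  have hs2 : (s:ℂ)^2 * ((1 - lam^2 : ℝ) : ℂ) = 1 := by
    have : s^2 * (1 - lam^2) = 1 := by
      rw [hs', inv_pow, Real.sq_sqrt hlam2.le]
      field_simp
    exact_mod_cast this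
  have key : ((s:ℂ) • N)ᴴ * ((s:ℂ) • N) = N := by
    rw [Matrix.conjTranspose_smul, hNherm]
    rw [Matrix.smul_mul, Matrix.mul_smul, hNN, smul_smul, smul_smul]
    have hstar : star (s:ℂ) = (s:ℂ) := by rw [Complex.star_def, Complex.conj_ofReal]
    rw [hstar]
    rw [show (s:ℂ) * (s:ℂ) * ((1 - lam^2 : ℝ) : ℂ) = (s:ℂ)^2 * ((1 - lam^2 : ℝ) : ℂ) by ring,
      hs2, one_smul]
  exact key ▸ Matrix.posSemidef_conjTranspose_mul_self ((s:ℂ) • N)
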